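/- Digit extraction preserves magic: if M is a 3×3 base-B lunar magic square with total T, then for every digit position d, the 3×3 matrix whose (i,j) entry is (the d-th base-B digit of M i j) · B^d is also a base-B lunar magic square, with total (the d-th base-B digit of T) · B^d. -/

import Mathlib

/-- The `d`-th base-`B` digit of `n` (position 0 is the least significant digit). -/
def lunarDigit (B n d : ℕ) : ℕ := n / B ^ d % B

/-- Base-`B` lunar addition: the `d`-th digit of `x ⊕ y` is the maximum of the
`d`-th digits of `x` and `y` (no carries). -/
def lunarAdd (B x y : ℕ) : ℕ :=
  ∑ d ∈ Finset.range (x + y + 1), max (lunarDigit B x d) (lunarDigit B y d) * B ^ d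

/-- Base-`B` lunar multiplication: the `d`-th digit of `x ⊗ y` is the maximum over
`j + k = d` of the minimum of the `j`-th digit of `x` and the `k`-th digit of `y`. -/
def lunarMul (B x y : ℕ) : ℕ :=
  ∑ d ∈ Finset.range (x + y + 1),
    ((Finset.range (d + 1)).sup fun j => min (lunarDigit B x j) (lunarDigit B y (d - j))) * B ^ d

/-- `M` is a 3×3 base-`B` lunar magic square with total `T`: the lunar sums of the
three rows, the three columns, and the two diagonals all equal `T`. -/
def IsLunarMagic (B : ℕ) (M : Fin 3 → Fin 3 → ℕ) (T : ℕ) : Prop :=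
  (∀ i, lunarAdd B (lunarAdd B (M i 0) (M i 1)) (M i 2) = T) ∧
  (∀ j, lunarAdd B (lunarAdd B (M 0 j) (M 1 j)) (M 2 j) = T) ∧
  lunarAdd B (lunarAdd B (M 0 0) (M 1 1)) (M 2 2) = T ∧
  lunarAdd B (lunarAdd B (M 0 2) (M 1 1)) (M 2 0) = T

/-- The nine entries of `M` are pairwise distinct. -/
def DistinctEntries (M : Fin 3 → Fin 3 → ℕ) : Prop :=
  ∀ i j i' j', M i j = M i' j' → i = i' ∧ j = j'

section Aux
variable {B : ℕ}

lemma digit_lt (hB : 2 ≤ B) (n d : ℕ) : lunarDigit B n d < B :=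
  Nat.mod_lt _ (by omega)

lemma sum_div_base (hB : 2 ≤ B) {M : ℕ} {c : ℕ → ℕ} (hc : c 0 < B) :
    (∑ e ∈ Finset.range M, c e * B ^ e) / B = ∑ e ∈ Finset.range (M - 1), c (e + 1) * B ^ e := by
  cases M with
  | zero => simp
  | succ m =>
    rw [Finset.sum_range_succ']
    have : ∑ e ∈ Finset.range m, c (e + 1) * B ^ (e + 1)
        = B * ∑ e ∈ Finset.range m, c (e + 1) * B ^ e := by
      rw [Finset.mul_sum]; apply Finset.sum_congr rfl; intro e _; ring
    rw [this, pow_zero, mul_one, add_comm, Nat.add_mul_div_left _ _ (by omega : 0 < B),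
      Nat.div_eq_of_lt hc]
    simp

lemma sum_lt_pow (hB : 2 ≤ B) {N : ℕ} {c : ℕ → ℕ} (hc : ∀ e, c e < B) :
    (∑ e ∈ Finset.range N, c e * B ^ e) < B ^ N := by
  induction N with
  | zero => simp
  | succ n ih =>
    rw [Finset.sum_range_succ, pow_succ]
    have h1 := hc n
    have h2 : c n * B ^ n ≤ (B - 1) * B ^ n := Nat.mul_le_mul_right _ (by omega)
    have h3 : 0 < B ^ n := Nat.pow_pos (by omega)
    nlinarith

lemma digit_sum (hB : 2 ≤ B) {N : ℕ} {c : ℕ → ℕ} (hc : ∀ e, c e < B) (d : ℕ) :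
    lunarDigit B (∑ e ∈ Finset.range N, c e * B ^ e) d = if d < N then c d else 0 := by
  have key : ∀ d N (c : ℕ → ℕ), (∀ e, c e < B) →
      (∑ e ∈ Finset.range N, c e * B ^ e) / B ^ d
        = ∑ e ∈ Finset.range (N - d), c (d + e) * B ^ e := by
    intro d
    induction d with
    | zero => intro N c hc; simp
    | succ k ih =>
        intro N c hc
        rw [pow_succ, ← Nat.div_div_eq_div_mul, ih N c hc,
          show (∑ e ∈ Finset.range (N - k), c (k + e) * B ^ e) / B
            = ∑ e ∈ Finset.range (N - k - 1), c (k + (e + 1)) * B ^ e from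
            sum_div_base hB (by simpa using hc k)]
        apply Finset.sum_congr (by rw [Nat.sub_sub])
        intro e _; congr 2; omega
  unfold lunarDigit
  rw [key d N c hc]
  split
  · next h =>
    obtain ⟨m, hm⟩ : ∃ m, N - d = m + 1 := ⟨N - d - 1, by omega⟩
    rw [hm, Finset.sum_range_succ']
    have : ∑ e ∈ Finset.range m, c (d + (e + 1)) * B ^ (e + 1)
        = B * ∑ e ∈ Finset.range m, c (d + (e + 1)) * B ^ e := by
      rw [Finset.mul_sum]; apply Finset.sum_congr rfl; intro e _; ring
    rw [this, pow_zero, mul_one, add_comm, mul_comm, Nat.add_mul_mod_self_right,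
      Nat.mod_eq_of_lt (hc _)]
    norm_num
  · next h =>
    have : N - d = 0 := by omega
    simp [this]

lemma digit_high (hB : 2 ≤ B) {x d : ℕ} (hd : x < d) : lunarDigit B x d = 0 := by
  have : x < B ^ d := lt_of_lt_of_le (Nat.lt_pow_self (by omega) : x < B ^ x)
    (Nat.pow_le_pow_right (by omega) (le_of_lt hd))
  unfold lunarDigit
  rw [Nat.div_eq_of_lt this]; simp

lemma lunarAdd_digit (hB : 2 ≤ B) (x y d : ℕ) :
    lunarDigit B (lunarAdd B x y) d = max (lunarDigit B x d) (lunarDigit B y d) := by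
  unfold lunarAdd
  rw [digit_sum hB (fun e => max_lt (digit_lt hB x e) (digit_lt hB y e)) d]
  split
  · rfl
  · next h =>
    rw [digit_high hB (by omega), digit_high hB (by omega)]; simp

lemma digit_single (hB : 2 ≤ B) {a : ℕ} (ha : a < B) (d e : ℕ) :
    lunarDigit B (a * B ^ d) e = if e = d then a else 0 := by
  have : a * B ^ d = ∑ e ∈ Finset.range (d + 1), (if e = d then a else 0) * B ^ e := by
    rw [Finset.sum_eq_single d]
    · simp
    · intro b _ hb; simp [hb]
    · intro h; simp at h
  rw [this, digit_sum hB (fun e => by split <;> omega)]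
  split <;> split <;> omega

lemma lunarAdd_single (hB : 2 ≤ B) {a b : ℕ} (ha : a < B) (hb : b < B) (d : ℕ) :
    lunarAdd B (a * B ^ d) (b * B ^ d) = max a b * B ^ d := by
  by_cases h0 : a = 0 ∧ b = 0
  · obtain ⟨rfl, rfl⟩ := h0
    simp [lunarAdd, lunarDigit]
  · unfold lunarAdd
    have hd : d < a * B ^ d + b * B ^ d + 1 := by
      have hp : d < B ^ d := (Nat.lt_pow_self (by omega) : d < B ^ d)
      rcases Nat.eq_zero_or_pos a with rfl | hap
      · have : 1 ≤ b := by omega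
        nlinarith
      · nlinarith
    rw [Finset.sum_eq_single d]
    · rw [digit_single hB ha, digit_single hB hb]; simp
    · intro e _ he
      rw [digit_single hB ha, digit_single hB hb]
      simp [he]
    · intro h; simp at h; omega

lemma lunar_key (hB : 2 ≤ B) {p q r T : ℕ} (d : ℕ)
    (h : lunarAdd B (lunarAdd B p q) r = T) :
    lunarAdd B (lunarAdd B (lunarDigit B p d * B ^ d) (lunarDigit B q d * B ^ d))
      (lunarDigit B r d * B ^ d) = lunarDigit B T d * B ^ d := by
  rw [lunarAdd_single hB (digit_lt hB p d) (digit_lt hB q d),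
    lunarAdd_single hB (max_lt (digit_lt hB p d) (digit_lt hB q d)) (digit_lt hB r d)]
  congr 1
  rw [← h, lunarAdd_digit hB, lunarAdd_digit hB]

end Aux


theorem stmt_5 (B : ℕ) (hB : 2 ≤ B) (M : Fin 3 → Fin 3 → ℕ) (T : ℕ)
    (hM : IsLunarMagic B M T) (d : ℕ) :
    IsLunarMagic B (fun i j => lunarDigit B (M i j) d * B ^ d)
      (lunarDigit B T d * B ^ d) := by
  obtain ⟨h1, h2, h3, h4⟩ := hM
  exact ⟨fun i => lunar_key hB d (h1 i), fun j => lunar_key hB d (h2 j),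
    lunar_key hB d h3, lunar_key hB d h4⟩
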